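/- In the mean-field setting, assume λ > 0 and p_out ≤ τ ≤ p_in. Let c₀ > 0 and let A be any symmetric real n×n matrix with ‖A − EA‖₂ ≤ c₀·√d. Set A_τ := A − τ·1ₙ1ₙᵀ, α := ‖A_τ‖₂ and L̃ := α·I − A_τ + λ·P_L, and assume L̃ is invertible. Let X := λ·L̃⁻¹·S and X^MF := λ·EL̃⁻¹·S. Then ‖X − X^MF‖₂ ≤ ( 4·c₀·√d / ( (α^MF + λ)·( 1 − √( 1 − 4·(θ+η)·λ·α^MF/(λ + α^MF)² ) ) ) )·‖X‖₂. -/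

import Mathlib

open Finset Matrix

noncomputable section

/-- The spectral norm (operator 2-norm) of a real square matrix. -/
def specNorm {n : ℕ} (M : Matrix (Fin n) (Fin n) ℝ) : ℝ :=
  ‖Matrix.toEuclideanCLM (𝕜 := ℝ) M‖

/-- The Euclidean norm of a real vector. -/
def euclNorm {n : ℕ} (v : Fin n → ℝ) : ℝ := Real.sqrt (∑ i, v i ^ 2)

/-- The expected adjacency matrix `EA` of the SSBM. -/
def meanEA (n : ℕ) (pin pout : ℝ) (σ0 : Fin n → ℝ) : Matrix (Fin n) (Fin n) ℝ :=
  Matrix.of fun i j => if σ0 i = σ0 j then pin else pout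

/-- The diagonal 0-1 matrix `P_L` with `(P_L)_{ii} = 1` iff `S_i ≠ 0`. -/
def labelProj (n : ℕ) (S : Fin n → ℝ) : Matrix (Fin n) (Fin n) ℝ :=
  Matrix.diagonal fun i => if S i = 0 then 0 else 1

/-- The mean-field matrix `EL̃ = α^MF·I − EA_τ + λ·P_L`. -/
def meanLtilde (n : ℕ) (pin pout τ lam : ℝ) (σ0 S : Fin n → ℝ) :
    Matrix (Fin n) (Fin n) ℝ :=
  ((n : ℝ) * (pin - pout) / 2) • (1 : Matrix (Fin n) (Fin n) ℝ)
    - Matrix.of (fun i j => meanEA n pin pout σ0 i j - τ)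
    + lam • labelProj n S

/-- The empirical matrix `L̃ = α·I − A_τ + λ·P_L`, with `A_τ = A − τ·1ₙ1ₙᵀ` and
`α = ‖A_τ‖₂`. -/
def empLtilde (n : ℕ) (τ lam : ℝ) (A : Matrix (Fin n) (Fin n) ℝ) (S : Fin n → ℝ) :
    Matrix (Fin n) (Fin n) ℝ :=
  specNorm (Matrix.of fun i j => A i j - τ) • (1 : Matrix (Fin n) (Fin n) ℝ)
    - Matrix.of (fun i j => A i j - τ)
    + lam • labelProj n S

/- ==================== auxiliary lemmas ==================== -/

lemma euclNorm_eq {n : ℕ} (v : Fin n → ℝ) :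
    euclNorm v = ‖(WithLp.equiv 2 (Fin n → ℝ)).symm v‖ := by
  rw [EuclideanSpace.norm_eq, euclNorm]
  congr 1
  apply Finset.sum_congr rfl
  intro i _
  rw [Real.norm_eq_abs, sq_abs]
  rfl

lemma euclNorm_mulVec_le {n : ℕ} (M : Matrix (Fin n) (Fin n) ℝ) (v : Fin n → ℝ) :
    euclNorm (M *ᵥ v) ≤ specNorm M * euclNorm v := by
  rw [euclNorm_eq, euclNorm_eq]
  have := (Matrix.toEuclideanCLM (𝕜 := ℝ) M).le_opNorm ((WithLp.equiv 2 (Fin n → ℝ)).symm v)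
  exact this

lemma specNorm_le_of_bound {n : ℕ} (M : Matrix (Fin n) (Fin n) ℝ) (c : ℝ) (hc : 0 ≤ c)
    (h : ∀ v, euclNorm (M *ᵥ v) ≤ c * euclNorm v) : specNorm M ≤ c := by
  apply ContinuousLinearMap.opNorm_le_bound _ hc
  intro x
  have := h (WithLp.equiv 2 (Fin n → ℝ) x)
  rw [euclNorm_eq, euclNorm_eq] at this
  exact this

lemma dot_le_euclNorm {n : ℕ} (v w : Fin n → ℝ) : v ⬝ᵥ w ≤ euclNorm v * euclNorm w := by
  have := real_inner_le_norm ((WithLp.equiv 2 (Fin n → ℝ)).symm v)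
    ((WithLp.equiv 2 (Fin n → ℝ)).symm w)
  rw [← euclNorm_eq, ← euclNorm_eq] at this
  simpa [EuclideanSpace.inner_eq_star_dotProduct, dotProduct, mul_comm] using this

lemma euclNorm_nonneg {n : ℕ} (v : Fin n → ℝ) : 0 ≤ euclNorm v := Real.sqrt_nonneg _

lemma euclNorm_sq {n : ℕ} (v : Fin n → ℝ) : euclNorm v ^ 2 = ∑ i, v i ^ 2 :=
  Real.sq_sqrt (by positivity)

lemma euclNorm_smul {n : ℕ} (c : ℝ) (v : Fin n → ℝ) : euclNorm (c • v) = |c| * euclNorm v := by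
  simp only [euclNorm, Pi.smul_apply, smul_eq_mul, mul_pow, ← Finset.mul_sum]
  rw [Real.sqrt_mul (sq_nonneg c), Real.sqrt_sq_eq_abs]

lemma specNorm_nonneg {n : ℕ} (M : Matrix (Fin n) (Fin n) ℝ) : 0 ≤ specNorm M :=
  norm_nonneg _

lemma abs_specNorm_sub_le {n : ℕ} (M N : Matrix (Fin n) (Fin n) ℝ) :
    |specNorm M - specNorm N| ≤ specNorm (M - N) := by
  have h := abs_norm_sub_norm_le (Matrix.toEuclideanCLM (𝕜 := ℝ) M)
    (Matrix.toEuclideanCLM (𝕜 := ℝ) N)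
  rwa [← map_sub] at h

lemma specNorm_add_le {n : ℕ} (M N : Matrix (Fin n) (Fin n) ℝ) :
    specNorm (M + N) ≤ specNorm M + specNorm N := by
  rw [specNorm, map_add]
  exact norm_add_le _ _

lemma specNorm_smul_one_le {n : ℕ} (c : ℝ) :
    specNorm (c • (1 : Matrix (Fin n) (Fin n) ℝ)) ≤ |c| := by
  apply specNorm_le_of_bound _ _ (abs_nonneg c)
  intro v
  rw [smul_mulVec, one_mulVec, euclNorm_smul]

lemma mu_euclNorm_le {n : ℕ} (μ : ℝ) (hμ : 0 ≤ μ) (v w : Fin n → ℝ)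
    (h : μ * (∑ i, v i ^ 2) ≤ v ⬝ᵥ w) : μ * euclNorm v ≤ euclNorm w := by
  by_cases hv : ∑ i, v i ^ 2 = 0
  · simp only [euclNorm, hv, Real.sqrt_zero, mul_zero]
    exact euclNorm_nonneg w
  · have hvpos : 0 < euclNorm v := by
      apply Real.sqrt_pos.mpr
      rcases lt_or_eq_of_le (Finset.sum_nonneg (fun i _ => sq_nonneg (v i))) with h' | h'
      · exact h'
      · exact absurd h'.symm hv
    have h1 : μ * euclNorm v * euclNorm v ≤ euclNorm w * euclNorm v := by
      calc μ * euclNorm v * euclNorm v = μ * (euclNorm v ^ 2) := by ring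
        _ = μ * ∑ i, v i ^ 2 := by rw [euclNorm_sq]
        _ ≤ v ⬝ᵥ w := h
        _ ≤ euclNorm v * euclNorm w := dot_le_euclNorm v w
        _ = euclNorm w * euclNorm v := mul_comm _ _
    exact le_of_mul_le_mul_right h1 hvpos

lemma scal_key (alpha lam mu rho c r Nr a b w u : ℝ)
    (halpha : 0 < alpha)
    (hroot : mu^2 - (alpha+lam)*mu + rho*lam*alpha = 0)
    (hmulet : mu < alpha*rho) (hrho2 : rho < 1)
    (hc : 0 < c) (hcr : c * r = alpha * rho) (hcN : c * Nr = alpha * (1-rho))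
    (ha : a^2 ≤ r * w) (hb : b^2 ≤ Nr * u) (hw : 0 ≤ w) (hu : 0 ≤ u) :
    c * (a+b)^2 ≤ (alpha - mu) * (w + u) + lam * w := by
  have hd : 0 < alpha * rho - mu := by linarith
  have h1ρ : 0 < alpha * (1-rho) := by nlinarith
  set t := alpha * (1-rho) / (alpha*rho - mu) with ht_def
  have ht : 0 < t := div_pos h1ρ hd
  have hinv : 1/t = (alpha*rho - mu) / (alpha*(1-rho)) := by
    rw [ht_def, one_div_div]
  have key : (a+b)^2 ≤ (1+t)*a^2 + (1+1/t)*b^2 := by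
    have hit : 1/t * t = 1 := by field_simp
    have h2 : (a+b)^2 * t ≤ ((1+t)*a^2 + (1+1/t)*b^2) * t := by
      nlinarith [sq_nonneg (t*a - b)]
    exact le_of_mul_le_mul_right h2 ht
  have id1 : alpha*rho*(1+t) = alpha+lam-mu := by
    rw [ht_def]
    field_simp
    nlinarith [hroot]
  have id2 : alpha*(1-rho)*(1+1/t) = alpha - mu := by
    rw [hinv]
    rw [mul_add, mul_one, mul_div_assoc', mul_div_cancel_left₀ _ h1ρ.ne']
    ring
  have h1t : 0 ≤ 1 + t := by linarith
  have h2t : 0 ≤ 1 + 1/t := by positivity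
  calc c * (a+b)^2 ≤ c * ((1+t)*a^2 + (1+1/t)*b^2) :=
        mul_le_mul_of_nonneg_left key hc.le
    _ ≤ c * ((1+t)*(r*w) + (1+1/t)*(Nr*u)) := by gcongr
    _ = (alpha*rho*(1+t))*w + (alpha*(1-rho)*(1+1/t))*u := by
        linear_combination ((1+t)*w)*hcr + ((1+1/t)*u)*hcN
    _ = (alpha+lam-mu)*w + (alpha-mu)*u := by rw [id1, id2]
    _ = (alpha - mu) * (w + u) + lam * w := by ring

lemma mu_facts (alpha lam rho mu : ℝ) (ha : 0 < alpha) (hl : 0 < lam)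
    (hr1 : 0 < rho) (hr2 : rho < 1)
    (hmu : mu = ((alpha+lam) - Real.sqrt ((alpha+lam)^2 - 4*rho*lam*alpha))/2) :
    mu^2 - (alpha+lam)*mu + rho*lam*alpha = 0 ∧ 0 < mu ∧ mu < alpha*rho ∧
      2*mu = (alpha+lam)*(1 - Real.sqrt (1 - 4*rho*lam*alpha/(lam+alpha)^2)) := by
  set disc := (alpha+lam)^2 - 4*rho*lam*alpha with hdisc_def
  have hdisc : 0 < disc := by
    nlinarith [sq_nonneg (alpha-lam), mul_pos (mul_pos hl ha) (sub_pos.mpr hr2)]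
  set s := Real.sqrt disc with hs_def
  have hs : s^2 = disc := Real.sq_sqrt hdisc.le
  have hsnn : 0 ≤ s := Real.sqrt_nonneg _
  have hspos : 0 < s := Real.sqrt_pos.mpr hdisc
  refine ⟨by rw [hmu]; linear_combination hs/4, ?_, ?_, ?_⟩
  · have h1 : s < alpha + lam := by
      have h2 : disc < (alpha+lam)^2 := by nlinarith [mul_pos (mul_pos hr1 hl) ha]
      calc s < Real.sqrt ((alpha+lam)^2) := Real.sqrt_lt_sqrt hdisc.le h2
        _ = alpha + lam := Real.sqrt_sq (by positivity)
    rw [hmu]; linarith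
  · have h1 : alpha + lam - 2*(alpha*rho) < s := by
      by_contra h
      push_neg at h
      nlinarith [mul_nonneg (sub_nonneg.mpr h) hsnn,
        mul_nonneg (sub_nonneg.mpr h) (hsnn.trans h),
        mul_pos (mul_pos (mul_pos ha ha) hr1) (sub_pos.mpr hr2)]
    rw [hmu]; linarith
  · rw [hmu]
    have h0 : (0:ℝ) < (lam+alpha)^2 := by positivity
    have h1 : 1 - 4*rho*lam*alpha/(lam+alpha)^2 = disc/(lam+alpha)^2 := by
      field_simp
      ring
    rw [h1, Real.sqrt_div' _ h0.le, Real.sqrt_sq (by positivity : (0:ℝ) ≤ lam+alpha)]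
    field_simp
    ring

/- ==================== main theorem ==================== -/

set_option maxHeartbeats 2000000 in
/-- **Theorem 2 (concentration around the mean field).** In the mean-field setting
with `λ > 0` and `p_out ≤ τ ≤ p_in`, if `‖A − EA‖₂ ≤ c₀√d` and `L̃ = α·I − A_τ + λ·P_L`
is invertible, then the solutions `X = λL̃⁻¹S` and `X^MF = λEL̃⁻¹S` satisfy
`‖X − X^MF‖₂ ≤ (4c₀√d / ((α^MF+λ)(1 − √(1 − 4(θ+η)λα^MF/(λ+α^MF)²))))·‖X‖₂`. -/
theorem concentration_around_mean_field
    (n : ℕ) (hn : 0 < n) (hev : Even n) (pin pout : ℝ)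
    (hpout : 0 < pout) (hp : pout < pin) (hpin : pin < 1)
    (k m : ℕ) (hkm1 : 1 ≤ k + m) (hkm2 : k + m ≤ n / 2 - 1)
    (σ0 S : Fin n → ℝ)
    (hσ : ∀ i, σ0 i = 1 ∨ σ0 i = -1)
    (hbal : (Finset.univ.filter (fun i => σ0 i = 1)).card = n / 2)
    (hSval : ∀ i, S i = σ0 i ∨ S i = -σ0 i ∨ S i = 0)
    (hk1 : (Finset.univ.filter (fun i => σ0 i = 1 ∧ S i = -1)).card = k)
    (hk2 : (Finset.univ.filter (fun i => σ0 i = -1 ∧ S i = 1)).card = k)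
    (hm1 : (Finset.univ.filter (fun i => σ0 i = 1 ∧ S i = 1)).card = m)
    (hm2 : (Finset.univ.filter (fun i => σ0 i = -1 ∧ S i = -1)).card = m)
    (τ lam : ℝ) (hlam : 0 < lam) (hτ1 : pout ≤ τ) (hτ2 : τ ≤ pin)
    (c0 : ℝ) (hc0 : 0 < c0)
    (A : Matrix (Fin n) (Fin n) ℝ) (hAsym : A.IsSymm)
    (hA : specNorm (A - meanEA n pin pout σ0)
      ≤ c0 * Real.sqrt ((n : ℝ) * (pin + pout) / 2))
    (hinv : IsUnit (empLtilde n τ lam A S).det) :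
    euclNorm (lam • ((empLtilde n τ lam A S)⁻¹ *ᵥ S)
        - lam • ((meanLtilde n pin pout τ lam σ0 S)⁻¹ *ᵥ S))
      ≤ (4 * c0 * Real.sqrt ((n : ℝ) * (pin + pout) / 2)
          / (((n : ℝ) * (pin - pout) / 2 + lam)
            * (1 - Real.sqrt (1 -
                4 * (2 * (k : ℝ) / (n : ℝ) + 2 * (m : ℝ) / (n : ℝ))
                  * lam * ((n : ℝ) * (pin - pout) / 2)
                  / (lam + (n : ℝ) * (pin - pout) / 2) ^ 2))))
        * euclNorm (lam • ((empLtilde n τ lam A S)⁻¹ *ᵥ S)) := by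
  -- abbreviations
  have hn' : (0:ℝ) < n := Nat.cast_pos.mpr hn
  set γ : ℝ := (pin - pout)/2 with hγ_def
  set β : ℝ := (pin + pout)/2 - τ with hβ_def
  have hγ : 0 < γ := by rw [hγ_def]; linarith
  set αm : ℝ := (n : ℝ) * (pin - pout) / 2 with hαm_def
  have hαm : 0 < αm := by
    rw [hαm_def]
    have h2 : 0 < pin - pout := by linarith
    positivity
  have hαmγ : αm = n * γ := by rw [hαm_def, hγ_def]; ring
  set ρ : ℝ := 2*((k:ℝ)+(m:ℝ))/(n:ℝ) with hρ_def
  -- cardinalities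
  have hn2 : n % 2 = 0 := Nat.even_iff.mp hev
  set N₀ := n / 2 with hN₀_def
  have hnN : n = 2 * N₀ := by omega
  have hkmN : k + m ≤ N₀ - 1 := hkm2
  have hN₀2 : 2 ≤ N₀ := by omega
  have hρ1 : 0 < ρ := by
    rw [hρ_def]
    have h1 : (1:ℝ) ≤ (k:ℝ) + m := by exact_mod_cast hkm1
    exact div_pos (by linarith) hn'
  have hρ2 : ρ < 1 := by
    rw [hρ_def, div_lt_one hn']
    have : (k:ℝ) + m ≤ (N₀:ℝ) - 1 := by
      have h1 : ((k + m : ℕ) : ℝ) ≤ ((N₀ - 1 : ℕ) : ℝ) := Nat.cast_le.mpr hkmN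
      push_cast [Nat.cast_sub (by omega : 1 ≤ N₀)] at h1
      push_cast
      linarith
    have hNn : (N₀ : ℝ) * 2 = n := by exact_mod_cast (by omega : N₀ * 2 = n)
    linarith
  set μ : ℝ := ((αm+lam) - Real.sqrt ((αm+lam)^2 - 4*ρ*lam*αm))/2 with hμ_def
  obtain ⟨hroot, hμpos, hμlt, hμeq⟩ := mu_facts αm lam ρ μ hαm hlam hρ1 hρ2 hμ_def
  -- the partition of Fin n
  set C1 := Finset.univ.filter (fun i => σ0 i = 1) with hC1_def
  set C2 := Finset.univ.filter (fun i => ¬ σ0 i = 1) with hC2_def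
  have hC1card : C1.card = N₀ := hbal
  have hC2card : C2.card = N₀ := by
    have h := Finset.card_filter_add_card_filter_not
      (s := (Finset.univ : Finset (Fin n))) (p := fun i => σ0 i = 1)
    simp only [Finset.card_univ, Fintype.card_fin] at h
    have h2 : C1.card + C2.card = n := h
    omega
  -- labeled subsets
  have hιnot : ∀ i, ¬ σ0 i = 1 ↔ σ0 i = -1 := by
    intro i
    rcases hσ i with h | h <;> rw [h] <;> norm_num
  set L1 := C1.filter (fun i => ¬ S i = 0) with hL1_def
  set U1 := C1.filter (fun i => S i = 0) with hU1_def
  set L2 := C2.filter (fun i => ¬ S i = 0) with hL2_def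
  set U2 := C2.filter (fun i => S i = 0) with hU2_def
  have hL1card : L1.card = k + m := by
    have e1 : L1 = (Finset.univ.filter (fun i => σ0 i = 1 ∧ S i = -1)) ∪
        (Finset.univ.filter (fun i => σ0 i = 1 ∧ S i = 1)) := by
      rw [hL1_def, hC1_def, Finset.filter_filter]
      ext i
      simp only [Finset.mem_filter, Finset.mem_union, Finset.mem_univ, true_and]
      constructor
      · rintro ⟨h1, h2⟩
        rcases hSval i with h3 | h3 | h3
        · right; exact ⟨h1, by rw [h3, h1]⟩
        · left; exact ⟨h1, by rw [h3, h1]⟩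
        · exact absurd h3 h2
      · rintro (⟨h1, h2⟩ | ⟨h1, h2⟩) <;> exact ⟨h1, by rw [h2]; norm_num⟩
    rw [e1, Finset.card_union_of_disjoint, hk1, hm1]
    rw [Finset.disjoint_left]
    intro i h1 h2
    simp only [Finset.mem_filter] at h1 h2
    rw [h1.2.2] at h2
    norm_num at h2
  have hL2card : L2.card = k + m := by
    have e1 : L2 = (Finset.univ.filter (fun i => σ0 i = -1 ∧ S i = 1)) ∪
        (Finset.univ.filter (fun i => σ0 i = -1 ∧ S i = -1)) := by
      rw [hL2_def, hC2_def, Finset.filter_filter]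
      ext i
      simp only [Finset.mem_filter, Finset.mem_union, Finset.mem_univ, true_and]
      constructor
      · rintro ⟨h1, h2⟩
        rw [hιnot i] at h1
        rcases hSval i with h3 | h3 | h3
        · right; exact ⟨h1, by rw [h3, h1]⟩
        · left; exact ⟨h1, by rw [h3, h1]; norm_num⟩
        · exact absurd h3 h2
      · rintro (⟨h1, h2⟩ | ⟨h1, h2⟩) <;>
          exact ⟨by rw [hιnot i]; exact h1, by rw [h2]; norm_num⟩
    rw [e1, Finset.card_union_of_disjoint, hk2, hm2]
    rw [Finset.disjoint_left]
    intro i h1 h2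
    simp only [Finset.mem_filter] at h1 h2
    rw [h1.2.2] at h2
    norm_num at h2
  have hU1card : U1.card = N₀ - (k+m) := by
    have h := Finset.card_filter_add_card_filter_not
      (s := C1) (p := fun i => S i = 0)
    have h2 : U1.card + L1.card = C1.card := h
    omega
  have hU2card : U2.card = N₀ - (k+m) := by
    have h := Finset.card_filter_add_card_filter_not
      (s := C2) (p := fun i => S i = 0)
    have h2 : U2.card + L2.card = C2.card := h
    omega
  -- splitting of sums
  have hsplitC : ∀ f : Fin n → ℝ, ∑ i, f i = (∑ i ∈ C1, f i) + ∑ i ∈ C2, f i := by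
    intro f
    rw [hC1_def, hC2_def]
    exact (Finset.sum_filter_add_sum_filter_not _ _ f).symm
  have hsplit1 : ∀ f : Fin n → ℝ, (∑ i ∈ C1, f i) = (∑ i ∈ L1, f i) + ∑ i ∈ U1, f i := by
    intro f
    rw [hL1_def, hU1_def, add_comm]
    exact (Finset.sum_filter_add_sum_filter_not C1 (fun i => S i = 0) f).symm
  have hsplit2 : ∀ f : Fin n → ℝ, (∑ i ∈ C2, f i) = (∑ i ∈ L2, f i) + ∑ i ∈ U2, f i := by
    intro f
    rw [hL2_def, hU2_def, add_comm]
    exact (Finset.sum_filter_add_sum_filter_not C2 (fun i => S i = 0) f).symm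
  -- sigma facts
  have hσ1 : ∀ i ∈ C1, σ0 i = 1 := by
    intro i hi
    rw [hC1_def] at hi
    exact (Finset.mem_filter.mp hi).2
  have hσ2 : ∀ i ∈ C2, σ0 i = -1 := by
    intro i hi
    rw [hC2_def] at hi
    exact (hιnot i).mp (Finset.mem_filter.mp hi).2
  have hσsq : ∀ i, σ0 i ^ 2 = 1 := by
    intro i
    rcases hσ i with h | h <;> rw [h] <;> norm_num
  have hσsum : ∑ i, σ0 i = 0 := by
    rw [hsplitC σ0, Finset.sum_congr rfl hσ1,
      Finset.sum_congr rfl hσ2]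
    simp [Finset.sum_const, hC1card, hC2card]
  -- entry formula for EA_tau
  set EAt : Matrix (Fin n) (Fin n) ℝ :=
    Matrix.of (fun i j => meanEA n pin pout σ0 i j - τ) with hEAt_def
  have hEntry : ∀ i j, meanEA n pin pout σ0 i j - τ = β + γ * (σ0 i * σ0 j) := by
    intro i j
    rcases hσ i with h1 | h1 <;> rcases hσ j with h2 | h2 <;>
      simp only [meanEA, Matrix.of_apply, h1, h2, hβ_def, hγ_def] <;> norm_num <;> ring
  have hEAt_mv : ∀ x : Fin n → ℝ, EAt *ᵥ x =
      fun i => β * (∑ j, x j) + γ * σ0 i * (∑ j, σ0 j * x j) := by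
    intro x
    funext i
    show ∑ j, (meanEA n pin pout σ0 i j - τ) * x j = _
    calc ∑ j, (meanEA n pin pout σ0 i j - τ) * x j
        = ∑ j, (β * x j + (γ * σ0 i) * (σ0 j * x j)) := by
          refine Finset.sum_congr rfl (fun j _ => ?_)
          rw [hEntry i j]; ring
      _ = β * (∑ j, x j) + (γ * σ0 i) * (∑ j, σ0 j * x j) := by
          rw [Finset.sum_add_distrib, Finset.mul_sum, Finset.mul_sum]
      _ = β * (∑ j, x j) + γ * σ0 i * (∑ j, σ0 j * x j) := by ring
  have hEAt_quad : ∀ x : Fin n → ℝ,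
      x ⬝ᵥ (EAt *ᵥ x) = β * (∑ i, x i)^2 + γ * (∑ i, σ0 i * x i)^2 := by
    intro x
    rw [hEAt_mv x]
    show ∑ i, x i * (β * (∑ j, x j) + γ * σ0 i * (∑ j, σ0 j * x j)) = _
    calc ∑ i, x i * (β * (∑ j, x j) + γ * σ0 i * (∑ j, σ0 j * x j))
        = ∑ i, ((β * (∑ j, x j)) * x i + (γ * (∑ j, σ0 j * x j)) * (σ0 i * x i)) := by
          refine Finset.sum_congr rfl (fun i _ => ?_); ring
      _ = (β * (∑ j, x j)) * (∑ i, x i) + (γ * (∑ j, σ0 j * x j)) * (∑ i, σ0 i * x i) := by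
          rw [Finset.sum_add_distrib, ← Finset.mul_sum, ← Finset.mul_sum]
      _ = β * (∑ i, x i)^2 + γ * (∑ i, σ0 i * x i)^2 := by ring
  have hsum_σx : ∀ x : Fin n → ℝ,
      ∑ i, σ0 i * x i = (∑ i ∈ C1, x i) - ∑ i ∈ C2, x i := by
    intro x
    have e2a : (∑ i ∈ C1, σ0 i * x i) = ∑ i ∈ C1, x i :=
      Finset.sum_congr rfl (fun i hi => by rw [hσ1 i hi, one_mul])
    have e2b : (∑ i ∈ C2, σ0 i * x i) = -∑ i ∈ C2, x i := by
      rw [← Finset.sum_neg_distrib]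
      exact Finset.sum_congr rfl (fun i hi => by rw [hσ2 i hi]; ring)
    calc ∑ i, σ0 i * x i = (∑ i ∈ C1, σ0 i * x i) + ∑ i ∈ C2, σ0 i * x i :=
          hsplitC _
      _ = (∑ i ∈ C1, x i) - ∑ i ∈ C2, x i := by rw [e2a, e2b]; ring
  -- cluster Cauchy-Schwarz bound
  have hst : ∀ x : Fin n → ℝ,
      (∑ i, x i)^2 + (∑ i, σ0 i * x i)^2 ≤ (n:ℝ) * ∑ i, x i ^ 2 := by
    intro x
    have hs1 : (∑ i ∈ C1, x i)^2 ≤ (N₀ : ℝ) * ∑ i ∈ C1, x i ^ 2 := by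
      have h := sq_sum_le_card_mul_sum_sq (s := C1) (f := x)
      rwa [hC1card] at h
    have hs2 : (∑ i ∈ C2, x i)^2 ≤ (N₀ : ℝ) * ∑ i ∈ C2, x i ^ 2 := by
      have h := sq_sum_le_card_mul_sum_sq (s := C2) (f := x)
      rwa [hC2card] at h
    have e1 : ∑ i, x i = (∑ i ∈ C1, x i) + ∑ i ∈ C2, x i := hsplitC x
    have e2 := hsum_σx x
    have e3 : (∑ i, x i ^ 2) = (∑ i ∈ C1, x i ^ 2) + ∑ i ∈ C2, x i ^ 2 :=
      hsplitC (fun i => x i ^ 2)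
    have hNn : ((N₀ : ℝ)) * 2 = n := by exact_mod_cast (by omega : N₀ * 2 = n)
    rw [e1, e2, e3, ← hNn]
    linarith [hs1, hs2]
  -- spectral norm of EAt equals αm
  have hβγ : β ≤ γ := by rw [hβ_def, hγ_def]; linarith
  have hβγ' : -γ ≤ β := by rw [hβ_def, hγ_def]; linarith
  have hEAt_norm : specNorm EAt = αm := by
    have hub : specNorm EAt ≤ αm := by
      apply specNorm_le_of_bound _ _ hαm.le
      intro x
      have hcomp : ∑ i, (EAt *ᵥ x) i ^ 2 ≤ (αm * euclNorm x)^2 := by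
        rw [hEAt_mv x]
        have e1 : ∀ i, (β * (∑ j, x j) + γ * σ0 i * (∑ j, σ0 j * x j))^2 =
            (β * (∑ j, x j))^2 + (γ * (∑ j, σ0 j * x j))^2 * (σ0 i^2)
              + (2 * β * γ * (∑ j, x j) * (∑ j, σ0 j * x j)) * σ0 i := by
          intro i; ring
        calc ∑ i, (β * (∑ j, x j) + γ * σ0 i * (∑ j, σ0 j * x j))^2
            = ∑ i, ((β * (∑ j, x j))^2 + (γ * (∑ j, σ0 j * x j))^2 * (σ0 i^2)
              + (2 * β * γ * (∑ j, x j) * (∑ j, σ0 j * x j)) * σ0 i) :=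
              Finset.sum_congr rfl (fun i _ => e1 i)
          _ = (n : ℝ) * ((β * (∑ j, x j))^2 + (γ * (∑ j, σ0 j * x j))^2) := by
              rw [Finset.sum_add_distrib, Finset.sum_add_distrib]
              have t1 : ∑ _i : Fin n, (β * (∑ j, x j))^2
                  = (n : ℝ) * (β * (∑ j, x j))^2 := by
                rw [Finset.sum_const, Finset.card_univ, Fintype.card_fin, nsmul_eq_mul]
              have t2 : ∑ i : Fin n, (γ * (∑ j, σ0 j * x j))^2 * (σ0 i^2)
                  = (n : ℝ) * (γ * (∑ j, σ0 j * x j))^2 := by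
                have h' : ∀ i ∈ Finset.univ, (γ * (∑ j, σ0 j * x j))^2 * (σ0 i^2) =
                    (γ * (∑ j, σ0 j * x j))^2 := fun i _ => by rw [hσsq i, mul_one]
                rw [Finset.sum_congr rfl h', Finset.sum_const, Finset.card_univ,
                  Fintype.card_fin, nsmul_eq_mul]
              have t3 : ∑ i : Fin n, (2 * β * γ * (∑ j, x j) * (∑ j, σ0 j * x j)) * σ0 i
                  = 0 := by
                rw [← Finset.mul_sum, hσsum, mul_zero]
              rw [t1, t2, t3]
              ring
          _ ≤ (αm * euclNorm x)^2 := by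
              have h1 := hst x
              have h2 : β^2 ≤ γ^2 := by nlinarith
              have h4 : (0:ℝ) ≤ (∑ j, x j)^2 := sq_nonneg _
              have h5 : euclNorm x ^ 2 = ∑ i, x i ^ 2 := euclNorm_sq x
              have h7 : (αm * euclNorm x)^2 = ((n:ℝ)*γ)^2 * ∑ i, x i ^ 2 := by
                rw [mul_pow, h5, hαmγ]
              have k1 : β^2 * (∑ j, x j)^2 ≤ γ^2 * (∑ j, x j)^2 :=
                mul_le_mul_of_nonneg_right h2 h4
              have k3 : (n:ℝ)*(β^2*(∑ j, x j)^2) ≤ (n:ℝ)*(γ^2*(∑ j, x j)^2) :=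
                mul_le_mul_of_nonneg_left k1 hn'.le
              rw [h7]
              calc (n : ℝ) * ((β * (∑ j, x j))^2 + (γ * (∑ j, σ0 j * x j))^2)
                  = (n:ℝ)*(β^2*(∑ j, x j)^2) + (n:ℝ)*(γ^2*(∑ j, σ0 j * x j)^2) := by
                    ring
                _ ≤ (n:ℝ)*(γ^2*(∑ j, x j)^2) + (n:ℝ)*(γ^2*(∑ j, σ0 j * x j)^2) := by
                    linarith
                _ = (n:ℝ)*γ^2*((∑ j, x j)^2 + (∑ j, σ0 j * x j)^2) := by ring
                _ ≤ (n:ℝ)*γ^2*((n:ℝ) * ∑ i, x i ^ 2) :=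
                    mul_le_mul_of_nonneg_left h1 (by positivity)
                _ = ((n:ℝ)*γ)^2 * ∑ i, x i ^ 2 := by ring
      have h6 : euclNorm (EAt *ᵥ x) = Real.sqrt (∑ i, (EAt *ᵥ x) i ^ 2) := rfl
      rw [h6]
      calc Real.sqrt (∑ i, (EAt *ᵥ x) i ^ 2) ≤ Real.sqrt ((αm * euclNorm x)^2) :=
            Real.sqrt_le_sqrt hcomp
        _ = αm * euclNorm x := Real.sqrt_sq (mul_nonneg hαm.le (euclNorm_nonneg x))
    have hlb : αm ≤ specNorm EAt := by
      have hv : EAt *ᵥ σ0 = αm • σ0 := by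
        rw [hEAt_mv σ0]
        funext i
        have e1 : ∑ j, σ0 j * σ0 j = (n : ℝ) := by
          have : ∀ j ∈ Finset.univ, σ0 j * σ0 j = 1 := by
            intro j _
            rcases hσ j with h | h <;> rw [h] <;> norm_num
          rw [Finset.sum_congr rfl this, Finset.sum_const, Finset.card_univ,
            Fintype.card_fin, nsmul_eq_mul, mul_one]
        show β * (∑ j, σ0 j) + γ * σ0 i * (∑ j, σ0 j * σ0 j) = αm * σ0 i
        rw [hσsum, e1, hαmγ]
        ring
      have hσnorm : 0 < euclNorm σ0 := by
        apply Real.sqrt_pos.mpr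
        have : ∀ i ∈ Finset.univ, σ0 i ^ 2 = 1 := fun i _ => hσsq i
        rw [Finset.sum_congr rfl this, Finset.sum_const, Finset.card_univ,
          Fintype.card_fin, nsmul_eq_mul, mul_one]
        exact hn'
      have h1 := euclNorm_mulVec_le EAt σ0
      rw [hv, euclNorm_smul, abs_of_pos hαm] at h1
      exact le_of_mul_le_mul_right h1 hσnorm
    linarith
  -- scalar helpers for the cluster inequality
  have hρn : ρ * n = 2*((k:ℝ)+m) := by
    rw [hρ_def]
    field_simp
  have hNn : ((N₀ : ℝ)) * 2 = n := by exact_mod_cast (by omega : N₀ * 2 = n)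
  have hcr : 2*γ*((k:ℝ)+m) = αm * ρ := by
    rw [hαmγ]
    linear_combination (-γ)*hρn
  have hcN : 2*γ*((N₀:ℝ)-((k:ℝ)+m)) = αm * (1-ρ) := by
    rw [hαmγ]
    linear_combination γ*hNn + γ*hρn
  have h2γ : 0 < 2*γ := by linarith
  have hkmcast : ((k+m : ℕ) : ℝ) = (k:ℝ)+m := by push_cast; ring
  have hkmN' : k + m ≤ N₀ := by omega
  have hNkmcast : ((N₀ - (k+m) : ℕ) : ℝ) = (N₀:ℝ)-((k:ℝ)+m) := by
    push_cast [Nat.cast_sub hkmN']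
    ring
  -- the quadratic form lower bound for the mean-field matrix
  have hP_mv : ∀ x : Fin n → ℝ, labelProj n S *ᵥ x =
      fun i => (if S i = 0 then 0 else 1) * x i := by
    intro x
    funext i
    rw [labelProj, Matrix.mulVec_diagonal]
  have hE_mv : ∀ x : Fin n → ℝ, meanLtilde n pin pout τ lam σ0 S *ᵥ x =
      αm • x - EAt *ᵥ x + lam • (fun i => (if S i = 0 then 0 else 1) * x i) := by
    intro x
    rw [meanLtilde, Matrix.add_mulVec, Matrix.sub_mulVec, Matrix.smul_mulVec,
      Matrix.one_mulVec, Matrix.smul_mulVec, hP_mv x, ← hαm_def, ← hEAt_def]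
  have hquad : ∀ x : Fin n → ℝ,
      μ * (∑ i, x i ^ 2) ≤ x ⬝ᵥ (meanLtilde n pin pout τ lam σ0 S *ᵥ x) := by
    intro x
    rw [hE_mv x, dotProduct_add, dotProduct_sub, dotProduct_smul, dotProduct_smul]
    simp only [smul_eq_mul]
    have hd1 : x ⬝ᵥ x = ∑ i, x i ^ 2 := by
      simp [dotProduct, sq]
    have hd2 : x ⬝ᵥ (fun i => (if S i = 0 then 0 else 1) * x i)
        = (∑ i ∈ L1, x i ^ 2) + ∑ i ∈ L2, x i ^ 2 := by
      show ∑ i, x i * ((if S i = 0 then 0 else 1) * x i) = _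
      have hwL1 : ∀ i ∈ L1, x i * ((if S i = 0 then 0 else 1) * x i) = x i ^ 2 := by
        intro i hi
        rw [hL1_def] at hi
        rw [if_neg (Finset.mem_filter.mp hi).2]
        ring
      have hwL2 : ∀ i ∈ L2, x i * ((if S i = 0 then 0 else 1) * x i) = x i ^ 2 := by
        intro i hi
        rw [hL2_def] at hi
        rw [if_neg (Finset.mem_filter.mp hi).2]
        ring
      have hwU1 : ∀ i ∈ U1, x i * ((if S i = 0 then 0 else 1) * x i) = 0 := by
        intro i hi
        rw [hU1_def] at hi
        rw [if_pos (Finset.mem_filter.mp hi).2]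
        ring
      have hwU2 : ∀ i ∈ U2, x i * ((if S i = 0 then 0 else 1) * x i) = 0 := by
        intro i hi
        rw [hU2_def] at hi
        rw [if_pos (Finset.mem_filter.mp hi).2]
        ring
      calc ∑ i, x i * ((if S i = 0 then 0 else 1) * x i)
          = ((∑ i ∈ L1, x i * ((if S i = 0 then 0 else 1) * x i))
              + ∑ i ∈ U1, x i * ((if S i = 0 then 0 else 1) * x i))
            + ((∑ i ∈ L2, x i * ((if S i = 0 then 0 else 1) * x i))
              + ∑ i ∈ U2, x i * ((if S i = 0 then 0 else 1) * x i)) := by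
            rw [hsplitC (fun i => x i * ((if S i = 0 then 0 else 1) * x i)),
              hsplit1 (fun i => x i * ((if S i = 0 then 0 else 1) * x i)),
              hsplit2 (fun i => x i * ((if S i = 0 then 0 else 1) * x i))]
        _ = (∑ i ∈ L1, x i ^ 2) + ∑ i ∈ L2, x i ^ 2 := by
            rw [Finset.sum_congr rfl hwL1, Finset.sum_congr rfl hwL2,
              Finset.sum_congr rfl hwU1, Finset.sum_congr rfl hwU2,
              Finset.sum_const_zero, Finset.sum_const_zero]
            ring
    rw [hd1, hd2, hEAt_quad x]
    -- cluster quantities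
    have ha1 : (∑ i ∈ L1, x i)^2 ≤ ((k:ℝ)+m) * ∑ i ∈ L1, x i ^ 2 := by
      have h := sq_sum_le_card_mul_sum_sq (s := L1) (f := x)
      rwa [hL1card, hkmcast] at h
    have ha2 : (∑ i ∈ L2, x i)^2 ≤ ((k:ℝ)+m) * ∑ i ∈ L2, x i ^ 2 := by
      have h := sq_sum_le_card_mul_sum_sq (s := L2) (f := x)
      rwa [hL2card, hkmcast] at h
    have hb1 : (∑ i ∈ U1, x i)^2 ≤ ((N₀:ℝ)-((k:ℝ)+m)) * ∑ i ∈ U1, x i ^ 2 := by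
      have h := sq_sum_le_card_mul_sum_sq (s := U1) (f := x)
      rwa [hU1card, hNkmcast] at h
    have hb2 : (∑ i ∈ U2, x i)^2 ≤ ((N₀:ℝ)-((k:ℝ)+m)) * ∑ i ∈ U2, x i ^ 2 := by
      have h := sq_sum_le_card_mul_sum_sq (s := U2) (f := x)
      rwa [hU2card, hNkmcast] at h
    have hwnn1 : (0:ℝ) ≤ ∑ i ∈ L1, x i ^ 2 :=
      Finset.sum_nonneg (fun i _ => sq_nonneg _)
    have hwnn2 : (0:ℝ) ≤ ∑ i ∈ L2, x i ^ 2 :=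
      Finset.sum_nonneg (fun i _ => sq_nonneg _)
    have hunn1 : (0:ℝ) ≤ ∑ i ∈ U1, x i ^ 2 :=
      Finset.sum_nonneg (fun i _ => sq_nonneg _)
    have hunn2 : (0:ℝ) ≤ ∑ i ∈ U2, x i ^ 2 :=
      Finset.sum_nonneg (fun i _ => sq_nonneg _)
    have scal1 := scal_key αm lam μ ρ (2*γ) ((k:ℝ)+m) ((N₀:ℝ)-((k:ℝ)+m))
      (∑ i ∈ L1, x i) (∑ i ∈ U1, x i) (∑ i ∈ L1, x i ^ 2) (∑ i ∈ U1, x i ^ 2)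
      hαm hroot hμlt hρ2 h2γ hcr hcN ha1 hb1 hwnn1 hunn1
    have scal2 := scal_key αm lam μ ρ (2*γ) ((k:ℝ)+m) ((N₀:ℝ)-((k:ℝ)+m))
      (∑ i ∈ L2, x i) (∑ i ∈ U2, x i) (∑ i ∈ L2, x i ^ 2) (∑ i ∈ U2, x i ^ 2)
      hαm hroot hμlt hρ2 h2γ hcr hcN ha2 hb2 hwnn2 hunn2
    have hsum1 : (∑ i ∈ C1, x i) = (∑ i ∈ L1, x i) + ∑ i ∈ U1, x i := hsplit1 x
    have hsum2 : (∑ i ∈ C2, x i) = (∑ i ∈ L2, x i) + ∑ i ∈ U2, x i := hsplit2 x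
    have hsq1 : (∑ i ∈ C1, x i ^ 2)
        = (∑ i ∈ L1, x i ^ 2) + ∑ i ∈ U1, x i ^ 2 := hsplit1 (fun i => x i ^ 2)
    have hsq2 : (∑ i ∈ C2, x i ^ 2)
        = (∑ i ∈ L2, x i ^ 2) + ∑ i ∈ U2, x i ^ 2 := hsplit2 (fun i => x i ^ 2)
    have hSig : (∑ i, x i ^ 2) = (∑ i ∈ C1, x i ^ 2) + ∑ i ∈ C2, x i ^ 2 :=
      hsplitC (fun i => x i ^ 2)
    -- bound the EAt quadratic form
    have key1 : β * (∑ i, x i)^2 + γ * (∑ i, σ0 i * x i)^2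
        ≤ 2*γ*(∑ i ∈ C1, x i)^2 + 2*γ*(∑ i ∈ C2, x i)^2 := by
      rw [hsplitC x, hsum_σx x]
      have hb := mul_le_mul_of_nonneg_right hβγ
        (sq_nonneg ((∑ i ∈ C1, x i) + ∑ i ∈ C2, x i))
      calc β * ((∑ i ∈ C1, x i) + ∑ i ∈ C2, x i)^2
            + γ * ((∑ i ∈ C1, x i) - ∑ i ∈ C2, x i)^2
          ≤ γ * ((∑ i ∈ C1, x i) + ∑ i ∈ C2, x i)^2
            + γ * ((∑ i ∈ C1, x i) - ∑ i ∈ C2, x i)^2 := add_le_add hb le_rfl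
        _ = 2*γ*(∑ i ∈ C1, x i)^2 + 2*γ*(∑ i ∈ C2, x i)^2 := by ring
    rw [hsum1] at key1
    rw [hsum2] at key1
    rw [hSig, hsq1, hsq2]
    have h9 : β * (∑ i, x i)^2 + γ * (∑ i, σ0 i * x i)^2
        ≤ (αm - μ) * (((∑ i ∈ L1, x i ^ 2) + ∑ i ∈ U1, x i ^ 2)
            + ((∑ i ∈ L2, x i ^ 2) + ∑ i ∈ U2, x i ^ 2))
          + lam * ((∑ i ∈ L1, x i ^ 2) + ∑ i ∈ L2, x i ^ 2) := by
      refine key1.trans ?_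
      calc 2*γ*((∑ i ∈ L1, x i) + ∑ i ∈ U1, x i)^2
            + 2*γ*((∑ i ∈ L2, x i) + ∑ i ∈ U2, x i)^2
          ≤ ((αm - μ) * ((∑ i ∈ L1, x i ^ 2) + ∑ i ∈ U1, x i ^ 2)
              + lam * ∑ i ∈ L1, x i ^ 2)
            + ((αm - μ) * ((∑ i ∈ L2, x i ^ 2) + ∑ i ∈ U2, x i ^ 2)
              + lam * ∑ i ∈ L2, x i ^ 2) := add_le_add scal1 scal2
        _ = (αm - μ) * (((∑ i ∈ L1, x i ^ 2) + ∑ i ∈ U1, x i ^ 2)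
              + ((∑ i ∈ L2, x i ^ 2) + ∑ i ∈ U2, x i ^ 2))
            + lam * ((∑ i ∈ L1, x i ^ 2) + ∑ i ∈ L2, x i ^ 2) := by ring
    calc μ * (((∑ i ∈ L1, x i ^ 2) + ∑ i ∈ U1, x i ^ 2)
          + ((∑ i ∈ L2, x i ^ 2) + ∑ i ∈ U2, x i ^ 2))
        = αm * (((∑ i ∈ L1, x i ^ 2) + ∑ i ∈ U1, x i ^ 2)
              + ((∑ i ∈ L2, x i ^ 2) + ∑ i ∈ U2, x i ^ 2))
          - ((αm - μ) * (((∑ i ∈ L1, x i ^ 2) + ∑ i ∈ U1, x i ^ 2)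
              + ((∑ i ∈ L2, x i ^ 2) + ∑ i ∈ U2, x i ^ 2))
            + lam * ((∑ i ∈ L1, x i ^ 2) + ∑ i ∈ L2, x i ^ 2))
          + lam * ((∑ i ∈ L1, x i ^ 2) + ∑ i ∈ L2, x i ^ 2) := by ring
      _ ≤ αm * (((∑ i ∈ L1, x i ^ 2) + ∑ i ∈ U1, x i ^ 2)
              + ((∑ i ∈ L2, x i ^ 2) + ∑ i ∈ U2, x i ^ 2))
          - (β * (∑ i, x i)^2 + γ * (∑ i, σ0 i * x i)^2)
          + lam * ((∑ i ∈ L1, x i ^ 2) + ∑ i ∈ L2, x i ^ 2) :=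
          add_le_add (sub_le_sub_left h9 _) le_rfl
  -- invertibility of the mean-field matrix
  have hEdet : IsUnit (meanLtilde n pin pout τ lam σ0 S).det := by
    rw [← Matrix.isUnit_iff_isUnit_det, ← Matrix.mulVec_injective_iff_isUnit]
    intro x y hxy
    have h0 : meanLtilde n pin pout τ lam σ0 S *ᵥ (x - y) = 0 := by
      rw [Matrix.mulVec_sub]
      rw [show meanLtilde n pin pout τ lam σ0 S *ᵥ x
          = meanLtilde n pin pout τ lam σ0 S *ᵥ y from hxy]
      rw [sub_self]
    have h1 := hquad (x - y)
    rw [h0, dotProduct_zero] at h1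
    have h2 : ∑ i, (x - y) i ^ 2 = 0 := by
      have hnn : (0:ℝ) ≤ ∑ i, (x - y) i ^ 2 :=
        Finset.sum_nonneg (fun i _ => sq_nonneg _)
      nlinarith
    have h3 := (Finset.sum_eq_zero_iff_of_nonneg
      (fun i _ => sq_nonneg ((x - y) i))).mp h2
    funext i
    have h4 := h3 i (Finset.mem_univ i)
    have h5 : (x - y) i = 0 := by
      exact pow_eq_zero_iff (by norm_num) |>.mp h4
    have h6 : x i - y i = 0 := h5
    linarith
  -- the final chain
  set d : ℝ := (n : ℝ) * (pin + pout) / 2 with hd_def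
  set Lm := empLtilde n τ lam A S with hLm_def
  set Em := meanLtilde n pin pout τ lam σ0 S with hEm_def
  set X := lam • (Lm⁻¹ *ᵥ S) with hX_def
  set Y := lam • (Em⁻¹ *ᵥ S) with hY_def
  have hLX : Lm *ᵥ X = lam • S := by
    rw [hX_def, Matrix.mulVec_smul, Matrix.mulVec_mulVec,
      Matrix.mul_nonsing_inv _ hinv, Matrix.one_mulVec]
  have hEY : Em *ᵥ Y = lam • S := by
    rw [hY_def, Matrix.mulVec_smul, Matrix.mulVec_mulVec,
      Matrix.mul_nonsing_inv _ hEdet, Matrix.one_mulVec]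
  have hdiff : Em *ᵥ (X - Y) = (Em - Lm) *ᵥ X := by
    rw [Matrix.mulVec_sub, hEY, Matrix.sub_mulVec, hLX]
  -- bound on the perturbation
  have hAτdiff : Matrix.of (fun i j => A i j - τ) - EAt = A - meanEA n pin pout σ0 := by
    rw [hEAt_def]
    ext i j
    simp only [Matrix.sub_apply, Matrix.of_apply]
    ring
  have hαdiff : |αm - specNorm (Matrix.of fun i j => A i j - τ)| ≤ c0 * Real.sqrt d := by
    have h := abs_specNorm_sub_le (Matrix.of fun i j => A i j - τ) EAt
    rw [hAτdiff, hEAt_norm] at h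
    rw [abs_sub_comm]
    exact h.trans hA
  have hEL : Em - Lm
      = (αm - specNorm (Matrix.of fun i j => A i j - τ)) • (1 : Matrix (Fin n) (Fin n) ℝ)
        + (A - meanEA n pin pout σ0) := by
    rw [hEm_def, hLm_def, meanLtilde, empLtilde, ← hαm_def, ← hEAt_def]
    ext i j
    simp only [Matrix.sub_apply, Matrix.add_apply, Matrix.smul_apply, Matrix.one_apply,
      Matrix.of_apply, smul_eq_mul, hEAt_def]
    split_ifs <;> ring
  have hELnorm : specNorm (Em - Lm) ≤ 2 * (c0 * Real.sqrt d) := by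
    rw [hEL]
    calc specNorm ((αm - specNorm (Matrix.of fun i j => A i j - τ))
          • (1 : Matrix (Fin n) (Fin n) ℝ) + (A - meanEA n pin pout σ0))
        ≤ specNorm ((αm - specNorm (Matrix.of fun i j => A i j - τ))
            • (1 : Matrix (Fin n) (Fin n) ℝ)) + specNorm (A - meanEA n pin pout σ0) :=
          specNorm_add_le _ _
      _ ≤ |αm - specNorm (Matrix.of fun i j => A i j - τ)| + c0 * Real.sqrt d :=
          add_le_add (specNorm_smul_one_le _) hA
      _ ≤ c0 * Real.sqrt d + c0 * Real.sqrt d := add_le_add hαdiff le_rfl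
      _ = 2 * (c0 * Real.sqrt d) := by ring
  have hchain : μ * euclNorm (X - Y) ≤ 2 * (c0 * Real.sqrt d) * euclNorm X := by
    have h1 := hquad (X - Y)
    have h2 : μ * euclNorm (X - Y) ≤ euclNorm (Em *ᵥ (X - Y)) :=
      mu_euclNorm_le μ hμpos.le _ _ h1
    rw [hdiff] at h2
    have h3 : euclNorm ((Em - Lm) *ᵥ X) ≤ specNorm (Em - Lm) * euclNorm X :=
      euclNorm_mulVec_le _ _
    have h4 : specNorm (Em - Lm) * euclNorm X ≤ (2 * (c0 * Real.sqrt d)) * euclNorm X :=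
      mul_le_mul_of_nonneg_right hELnorm (euclNorm_nonneg X)
    linarith
  have hρeq : 2*(k:ℝ)/(n:ℝ) + 2*(m:ℝ)/(n:ℝ) = ρ := by
    rw [hρ_def]
    ring
  rw [hρeq, ← hμeq]
  rw [div_mul_eq_mul_div, le_div_iff₀ (by linarith : (0:ℝ) < 2*μ)]
  linarith [hchain]

end
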